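/- If √f = [a₀; overline(a₁, …, aₙ, 2a₀)], then Bₙ(f − a₀²) = A_{n−1} + a₀B_{n−1}, where Aₖ/Bₖ are the convergents of √f. -/

import Mathlib

/-- The pair `(rₖ, sₖ)` of the continued fraction algorithm for `√f`:
`r₀ = 0`, `s₀ = 1`, `r_{k+1} = aₖ sₖ − rₖ`, `s_{k+1} = (f − r_{k+1}²)/sₖ`,
where `aₖ = ⌊(√f + rₖ)/sₖ⌋ = ⌊(⌊√f⌋ + rₖ)/sₖ⌋`. -/
def cfRS (f : ℕ) : ℕ → ℤ × ℤ
  | 0 => (0, 1)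
  | k + 1 =>
    let p := cfRS f k
    let a := Int.fdiv ((Nat.sqrt f : ℤ) + p.1) p.2
    let r' := a * p.2 - p.1
    (r', Int.fdiv ((f : ℤ) - r' ^ 2) p.2)

/-- The `k`-th partial quotient `aₖ` of the continued fraction of `√f`. -/
def cfA (f : ℕ) (k : ℕ) : ℤ :=
  Int.fdiv ((Nat.sqrt f : ℤ) + (cfRS f k).1) (cfRS f k).2

/-- Numerators of the convergents of `√f`, shifted by 2:
`cfNum f (k+2) = Aₖ`, with `A₋₂ = 0`, `A₋₁ = 1`. -/
def cfNum (f : ℕ) : ℕ → ℤ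
  | 0 => 0
  | 1 => 1
  | k + 2 => cfA f k * cfNum f (k + 1) + cfNum f k

/-- Denominators of the convergents of `√f`, shifted by 2:
`cfDen f (k+2) = Bₖ`, with `B₋₂ = 1`, `B₋₁ = 0`. -/
def cfDen (f : ℕ) : ℕ → ℤ
  | 0 => 1
  | 1 => 0
  | k + 2 => cfA f k * cfDen f (k + 1) + cfDen f k

/-- `p` is a period of the (eventually periodic) partial quotient sequence of `√f`. -/
def CFIsPeriod (f p : ℕ) : Prop :=
  0 < p ∧ ∀ k, 1 ≤ k → cfA f (k + p) = cfA f k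

/-- `p` is the (minimal) period of the continued fraction expansion of `√f`. -/
def CFPeriod (f p : ℕ) : Prop :=
  CFIsPeriod f p ∧ ∀ q, CFIsPeriod f q → p ≤ q

/-- `(c, h)` is the fundamental (smallest positive) solution of `c² − f h² = 1`. -/
def IsFundamentalPell (f : ℕ) (c h : ℤ) : Prop :=
  0 < c ∧ 0 < h ∧ c ^ 2 - (f : ℤ) * h ^ 2 = 1 ∧
    ∀ c' h' : ℤ, 0 < c' → 0 < h' → c' ^ 2 - (f : ℤ) * h' ^ 2 = 1 → c ≤ c'

namespace CF14

lemma cfRS_zero (f : ℕ) : cfRS f 0 = (0, 1) := rfl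

lemma cfRS_succ_fst (f k : ℕ) :
    (cfRS f (k+1)).1 = cfA f k * (cfRS f k).2 - (cfRS f k).1 := rfl

lemma cfRS_succ_snd (f k : ℕ) :
    (cfRS f (k+1)).2 = Int.fdiv ((f : ℤ) - (cfRS f (k+1)).1 ^ 2) (cfRS f k).2 := rfl

lemma nonsq_int {f : ℕ} (hns : ¬ IsSquare f) (m : ℤ) : (f : ℤ) ≠ m ^ 2 := by
  intro h
  apply hns
  refine ⟨m.natAbs, ?_⟩
  have h2 : (f : ℤ) = (m.natAbs : ℤ) * m.natAbs := by
    rw [h, Int.natAbs_mul_self']; ring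
  exact_mod_cast h2

lemma a0_sq_lt {f : ℕ} (hns : ¬ IsSquare f) : ((Nat.sqrt f : ℤ)) ^ 2 < (f : ℤ) := by
  have h1 : Nat.sqrt f ^ 2 ≤ f := Nat.sqrt_le' f
  have h2 : (f : ℤ) ≠ ((Nat.sqrt f : ℤ)) ^ 2 := nonsq_int hns _
  have h3 : ((Nat.sqrt f : ℤ)) ^ 2 ≤ (f : ℤ) := by exact_mod_cast h1
  omega

lemma lt_a0_succ_sq (f : ℕ) : (f : ℤ) < ((Nat.sqrt f : ℤ) + 1) ^ 2 := by
  have h1 : f < (Nat.sqrt f + 1) ^ 2 := Nat.lt_succ_sqrt' f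
  exact_mod_cast h1

lemma a0_pos {f : ℕ} (hf : 0 < f) (hns : ¬ IsSquare f) : 1 ≤ (Nat.sqrt f : ℤ) := by
  have h1 : f ≠ 1 := fun h => hns (h ▸ ⟨1, rfl⟩)
  have h2 : 2 ≤ f := by omega
  have : 1 ≤ Nat.sqrt f := by rw [Nat.le_sqrt]; omega
  exact_mod_cast this

noncomputable def sq (f : ℕ) : ℝ := Real.sqrt f

lemma sq_sq (f : ℕ) : sq f ^ 2 = f := Real.sq_sqrt (by positivity)

lemma a0_lt_sq {f : ℕ} (hns : ¬ IsSquare f) : ((Nat.sqrt f : ℤ) : ℝ) < sq f := by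
  rw [sq, show ((Nat.sqrt f : ℤ) : ℝ) = ((Nat.sqrt f : ℕ) : ℝ) by push_cast; ring]
  rw [Real.lt_sqrt (by positivity)]
  exact_mod_cast a0_sq_lt hns

lemma sq_lt_a0_succ (f : ℕ) : sq f < ((Nat.sqrt f : ℤ) : ℝ) + 1 := by
  rw [sq, show ((Nat.sqrt f : ℤ) : ℝ) + 1 = ((Nat.sqrt f + 1 : ℕ) : ℝ) by push_cast; ring]
  rw [Real.sqrt_lt' (by positivity)]
  exact_mod_cast lt_a0_succ_sq f

lemma sq_pos {f : ℕ} (hf : 0 < f) (hns : ¬ IsSquare f) : 0 < sq f :=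
  lt_of_le_of_lt (by positivity) (a0_lt_sq hns)

lemma fdiv_bounds (m : ℤ) {s : ℤ} (hs : 0 < s) :
    s * Int.fdiv m s ≤ m ∧ m < s * Int.fdiv m s + s := by
  have h1 := Int.fmod_add_mul_fdiv m s
  have h2 := Int.fmod_nonneg_of_pos m hs
  have h3 := Int.fmod_lt_of_pos m hs
  constructor <;> omega

/-- Invariant at index `j+1`. -/
def Inv (f j : ℕ) : Prop :=
  1 ≤ (cfRS f (j+1)).1 ∧ (cfRS f (j+1)).1 ≤ (Nat.sqrt f : ℤ) ∧
  1 ≤ (cfRS f (j+1)).2 ∧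
  (Nat.sqrt f : ℤ) + 1 ≤ (cfRS f (j+1)).1 + (cfRS f (j+1)).2 ∧
  (cfRS f (j+1)).2 ≤ (Nat.sqrt f : ℤ) + (cfRS f (j+1)).1 ∧
  (cfRS f (j+1)).2 * (cfRS f j).2 = (f : ℤ) - (cfRS f (j+1)).1 ^ 2

lemma cfRS_one (f : ℕ) : cfRS f 1 = ((Nat.sqrt f : ℤ), (f : ℤ) - (Nat.sqrt f : ℤ)^2) := by
  show ((Int.fdiv ((Nat.sqrt f : ℤ) + 0) 1) * 1 - 0, _) = _
  simp [cfRS, cfA, Int.fdiv_one]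

lemma inv_zero {f : ℕ} (hf : 0 < f) (hns : ¬ IsSquare f) : Inv f 0 := by
  have h1 := a0_sq_lt hns
  have h2 := lt_a0_succ_sq f
  have h3 := a0_pos hf hns
  unfold Inv
  rw [cfRS_one, cfRS_zero]
  dsimp only
  refine ⟨by nlinarith, by nlinarith, by nlinarith, by nlinarith, by nlinarith, by ring⟩


lemma step_core (x : ℝ) (a0 r s a r' s' : ℤ)
    (hx1 : ((a0:ℤ):ℝ) < x) (hx2 : x < ((a0:ℤ):ℝ) + 1)
    (hr2 : r ≤ a0) (hs1 : 1 ≤ s) (hsr : s ≤ a0 + r)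
    (hfd1 : s * a ≤ a0 + r) (hfd2 : a0 + r < s * a + s)
    (hr' : r' = a * s - r)
    (hkeyR : ((s':ℤ):ℝ) * ((s:ℤ):ℝ) = (x - ((r':ℤ):ℝ)) * (x + ((r':ℤ):ℝ))) :
    1 ≤ r' ∧ r' ≤ a0 ∧ 1 ≤ s' ∧ a0 + 1 ≤ r' + s' ∧ s' ≤ a0 + r' ∧ 1 ≤ a := by
  have haa : 1 ≤ a := by nlinarith
  have hr'le : r' ≤ a0 := by
    have hcomm : a * s = s * a := mul_comm a s
    omega
  have hsR : (0:ℝ) < ((s:ℤ):ℝ) := by exact_mod_cast hs1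
  have hA : ((r':ℤ):ℝ) < x := by
    have h : ((r':ℤ):ℝ) ≤ ((a0:ℤ):ℝ) := by exact_mod_cast hr'le
    linarith
  have hB : x - ((r':ℤ):ℝ) < ((s:ℤ):ℝ) := by
    have h2 : ((a0 + r : ℤ):ℝ) + 1 ≤ ((s*a + s : ℤ):ℝ) := by exact_mod_cast hfd2
    have h3 : ((r':ℤ):ℝ) = ((a:ℤ):ℝ) * ((s:ℤ):ℝ) - ((r:ℤ):ℝ) := by
      rw [hr']; push_cast; ring
    push_cast at h2 ⊢
    linarith
  have hC : ((s:ℤ):ℝ) < x + ((r':ℤ):ℝ) := by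
    have h3 : ((r':ℤ):ℝ) = ((a:ℤ):ℝ) * ((s:ℤ):ℝ) - ((r:ℤ):ℝ) := by
      rw [hr']; push_cast; ring
    have hrR : ((r:ℤ):ℝ) ≤ ((a0:ℤ):ℝ) := by exact_mod_cast hr2
    have haR : (1:ℝ) ≤ ((a:ℤ):ℝ) := by exact_mod_cast haa
    nlinarith [hsR, hrR, haR, hx1, h3]
  have hs'R : (0:ℝ) < ((s':ℤ):ℝ) := by nlinarith [hA, hC, hkeyR, hsR]
  have hs'pos : 1 ≤ s' := by
    have h : (0:ℤ) < s' := by exact_mod_cast hs'R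
    omega
  have hr'pos : 1 ≤ r' := by
    have h : (0:ℝ) < 2 * ((r':ℤ):ℝ) := by nlinarith [hA, hB, hC]
    have h2 : (0:ℤ) < r' := by
      have : (0:ℝ) < ((r':ℤ):ℝ) := by linarith
      exact_mod_cast this
    omega
  have hnew1 : s' ≤ a0 + r' := by
    have h : ((s':ℤ):ℝ) < x + ((r':ℤ):ℝ) := by nlinarith [hkeyR, hA, hB, hC, hsR, hs'R]
    have h2 : ((s' - r' : ℤ):ℝ) < ((a0 + 1 : ℤ):ℝ) := by push_cast at h ⊢; linarith
    have h3 : s' - r' < a0 + 1 := by exact_mod_cast h2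
    omega
  have hnew2 : a0 + 1 ≤ r' + s' := by
    have h : x - ((r':ℤ):ℝ) < ((s':ℤ):ℝ) := by nlinarith [hkeyR, hA, hB, hC, hsR, hs'R]
    have h2 : ((a0 : ℤ):ℝ) < ((r' + s' : ℤ):ℝ) := by push_cast at h ⊢; linarith
    have h3 : a0 < r' + s' := by exact_mod_cast h2
    omega
  exact ⟨hr'pos, hr'le, hs'pos, hnew2, hnew1, haa⟩

lemma inv_succ {f : ℕ} (hf : 0 < f) (hns : ¬ IsSquare f) {j : ℕ} (ih : Inv f j) :
    Inv f (j+1) := by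
  obtain ⟨hr1, hr2, hs1, hrs, hsr, hkey⟩ := ih
  set a0 : ℤ := (Nat.sqrt f : ℤ) with ha0
  set r := (cfRS f (j+1)).1 with hrd
  set s := (cfRS f (j+1)).2 with hsd
  set s0 := (cfRS f j).2 with hs0d
  have hspos : (0:ℤ) < s := hs1
  set a : ℤ := cfA f (j+1) with ha
  have hfd : s * a ≤ a0 + r ∧ a0 + r < s * a + s := fdiv_bounds (a0 + r) hspos
  have hr' : (cfRS f (j+2)).1 = a * s - r := cfRS_succ_fst f (j+1)
  set r' := (cfRS f (j+2)).1 with hr'd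
  have hdvd : (f : ℤ) - r' ^ 2 = s * (s0 - a^2*s + 2*a*r) := by
    rw [hr']; linear_combination -hkey
  have hs'e : (cfRS f (j+2)).2 = s0 - a^2*s + 2*a*r := by
    rw [cfRS_succ_snd f (j+1), ← hr'd, ← hsd, hdvd,
      Int.mul_fdiv_cancel_left _ (ne_of_gt hspos)]
  set s' := (cfRS f (j+2)).2 with hs'd
  have hkey' : s' * s = (f:ℤ) - r' ^ 2 := by rw [hs'e, hdvd]; ring
  have hkeyR : ((s':ℤ):ℝ) * ((s:ℤ):ℝ) = (sq f - ((r':ℤ):ℝ)) * (sq f + ((r':ℤ):ℝ)) := by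
    have hcast : ((s':ℤ):ℝ) * ((s:ℤ):ℝ) = ((f:ℕ):ℝ) - ((r':ℤ):ℝ)^2 := by
      exact_mod_cast congrArg (Int.cast : ℤ → ℝ) hkey'
    rw [hcast, ← sq_sq f]; ring
  obtain ⟨c1, c2, c3, c4, c5, _⟩ :=
    step_core (sq f) a0 r s a r' s' (a0_lt_sq hns) (sq_lt_a0_succ f)
      hr2 hs1 hsr hfd.1 hfd.2 hr' hkeyR
  exact ⟨c1, c2, c3, c4, c5, hkey'⟩

lemma inv_all {f : ℕ} (hf : 0 < f) (hns : ¬ IsSquare f) (j : ℕ) : Inv f j := by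
  induction j with
  | zero => exact inv_zero hf hns
  | succ j ih => exact inv_succ hf hns ih

noncomputable def xi (f : ℕ) (j : ℕ) : ℝ :=
  (sq f + (((cfRS f j).1 : ℤ) : ℝ)) / (((cfRS f j).2 : ℤ) : ℝ)

lemma xi_gt_one {f : ℕ} (hf : 0 < f) (hns : ¬ IsSquare f) (j : ℕ) : 1 < xi f (j+1) := by
  obtain ⟨hr1, hr2, hs1, hrs, hsr, hkey⟩ := inv_all hf hns j
  have hx1 := a0_lt_sq hns
  have hsR : (0:ℝ) < (((cfRS f (j+1)).2 : ℤ) : ℝ) := by exact_mod_cast hs1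
  rw [xi, lt_div_iff₀ hsR]
  have h1 : ((((cfRS f (j+1)).2 - (cfRS f (j+1)).1 : ℤ)) : ℝ) ≤ (((Nat.sqrt f : ℤ)) : ℝ) := by
    exact_mod_cast (by omega : (cfRS f (j+1)).2 - (cfRS f (j+1)).1 ≤ (Nat.sqrt f : ℤ))
  push_cast at h1 hx1 ⊢
  linarith

lemma xi_le {f : ℕ} (hf : 0 < f) (hns : ¬ IsSquare f) (j : ℕ) :
    xi f (j+1) ≤ sq f + ((Nat.sqrt f : ℤ) : ℝ) := by
  obtain ⟨hr1, hr2, hs1, hrs, hsr, hkey⟩ := inv_all hf hns j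
  have hx1 := a0_lt_sq hns
  have hsR : (1:ℝ) ≤ (((cfRS f (j+1)).2 : ℤ) : ℝ) := by exact_mod_cast hs1
  have hrR : (((cfRS f (j+1)).1 : ℤ) : ℝ) ≤ ((Nat.sqrt f : ℤ) : ℝ) := by exact_mod_cast hr2
  have h0 : (0:ℝ) ≤ sq f + (((cfRS f (j+1)).1 : ℤ) : ℝ) := by
    have : (0:ℝ) < (((cfRS f (j+1)).1 : ℤ) : ℝ) := by exact_mod_cast hr1
    nlinarith [sq_pos hf hns]
  calc xi f (j+1) ≤ sq f + (((cfRS f (j+1)).1 : ℤ) : ℝ) := div_le_self h0 hsR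
    _ ≤ _ := by linarith

lemma cfA_one_le {f : ℕ} (hf : 0 < f) (hns : ¬ IsSquare f) (j : ℕ) : 1 ≤ cfA f (j+1) := by
  obtain ⟨hr1, hr2, hs1, hrs, hsr, hkey⟩ := inv_all hf hns j
  have hfd := fdiv_bounds ((Nat.sqrt f : ℤ) + (cfRS f (j+1)).1) (show (0:ℤ) < (cfRS f (j+1)).2 from hs1)
  have h1 : (cfRS f (j+1)).2 * cfA f (j+1) ≤ (Nat.sqrt f : ℤ) + (cfRS f (j+1)).1 := hfd.1
  have h2 : (Nat.sqrt f : ℤ) + (cfRS f (j+1)).1 < (cfRS f (j+1)).2 * cfA f (j+1) + (cfRS f (j+1)).2 := hfd.2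
  nlinarith [h1, h2, hsr, hs1]

lemma xi_rec {f : ℕ} (hf : 0 < f) (hns : ¬ IsSquare f) (j : ℕ) :
    xi f (j+1) = ((cfA f (j+1) : ℤ) : ℝ) + 1 / xi f (j+2) := by
  obtain ⟨hr1, hr2, hs1, hrs, hsr, hkey⟩ := inv_all hf hns j
  obtain ⟨hr1', hr2', hs1', hrs', hsr', hkey'⟩ := inv_all hf hns (j+1)
  set a0 : ℤ := (Nat.sqrt f : ℤ)
  set r := (cfRS f (j+1)).1
  set s := (cfRS f (j+1)).2
  set r2 := (cfRS f (j+2)).1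
  set s2 := (cfRS f (j+2)).2
  set a : ℤ := cfA f (j+1)
  have hra : r2 = a * s - r := cfRS_succ_fst f (j+1)
  have hx1 : ((a0:ℤ):ℝ) < sq f := a0_lt_sq hns
  have hkeyc : s2 * s = (f : ℤ) - r2 ^ 2 := hkey'
  have hkeyR : ((s2:ℤ):ℝ) * ((s:ℤ):ℝ) = (sq f - ((r2:ℤ):ℝ)) * (sq f + ((r2:ℤ):ℝ)) := by
    have hcast : ((s2:ℤ):ℝ) * ((s:ℤ):ℝ) = ((f:ℕ):ℝ) - ((r2:ℤ):ℝ)^2 := by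
      exact_mod_cast congrArg (Int.cast : ℤ → ℝ) hkeyc
    rw [hcast, ← sq_sq f]; ring
  have hsR : (0:ℝ) < ((s:ℤ):ℝ) := by exact_mod_cast hs1
  have hs2R : (0:ℝ) < ((s2:ℤ):ℝ) := by exact_mod_cast hs1'
  have hposR : (0:ℝ) < sq f + ((r2:ℤ):ℝ) := by
    have : (0:ℝ) < ((r2:ℤ):ℝ) := by exact_mod_cast hr1'
    nlinarith [sq_pos hf hns]
  have hxi2 : xi f (j+2) = (sq f + ((r2:ℤ):ℝ)) / ((s2:ℤ):ℝ) := rfl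
  have hinv : 1 / xi f (j+2) = (sq f - ((r2:ℤ):ℝ)) / ((s:ℤ):ℝ) := by
    rw [hxi2, one_div_div, div_eq_div_iff hposR.ne' hsR.ne']
    linear_combination hkeyR
  rw [hinv, xi]
  have hraR : ((r2:ℤ):ℝ) = ((a:ℤ):ℝ) * ((s:ℤ):ℝ) - ((r:ℤ):ℝ) := by
    rw [hra]; push_cast; ring
  rw [div_eq_iff hsR.ne', add_mul, div_mul_cancel₀ _ hsR.ne']
  linear_combination hraR

lemma xi_lower {f : ℕ} (hf : 0 < f) (hns : ¬ IsSquare f) (j : ℕ) :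
    1 + 1 / (sq f + ((Nat.sqrt f : ℤ) : ℝ)) ≤ xi f (j+1) := by
  have hrec := xi_rec hf hns j
  have ha : (1:ℝ) ≤ ((cfA f (j+1) : ℤ) : ℝ) := by exact_mod_cast cfA_one_le hf hns j
  have hle := xi_le hf hns (j+1)
  have hpos : (0:ℝ) < xi f (j+2) := lt_trans one_pos (xi_gt_one hf hns (j+1))
  have hM : (0:ℝ) < sq f + ((Nat.sqrt f : ℤ) : ℝ) := by
    have := sq_pos hf hns
    have h2 : (1:ℝ) ≤ ((Nat.sqrt f : ℤ) : ℝ) := by exact_mod_cast a0_pos hf hns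
    linarith
  have : 1 / (sq f + ((Nat.sqrt f : ℤ) : ℝ)) ≤ 1 / xi f (j+2) :=
    one_div_le_one_div_of_le hpos hle
  linarith

lemma xi_periodic {f : ℕ} (hf : 0 < f) (hns : ¬ IsSquare f) {p : ℕ}
    (hp : ∀ k, 1 ≤ k → cfA f (k + p) = cfA f k) : xi f (1 + p) = xi f 1 := by
  set M : ℝ := sq f + ((Nat.sqrt f : ℤ) : ℝ) with hM
  have hMpos : (0:ℝ) < M := by
    have := sq_pos hf hns
    have h2 : (1:ℝ) ≤ ((Nat.sqrt f : ℤ) : ℝ) := by exact_mod_cast a0_pos hf hns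
    rw [hM]; linarith
  set c : ℝ := 1 + 1 / M with hc
  have hc1 : 1 < c := by
    rw [hc]; have : 0 < 1 / M := by positivity
    linarith
  set d : ℕ → ℝ := fun k => xi f (k + 1 + p) - xi f (k + 1) with hd
  have hgrow : ∀ k, c * |d k| ≤ |d (k+1)| := by
    intro k
    have h1 := xi_rec hf hns k
    have h2 := xi_rec hf hns (k + p)
    have hpk := hp (k+1) (by omega)
    have e1 : xi f (k + 1 + p) = xi f ((k + p) + 1) := by ring_nf
    have e2 : xi f (k + 1 + 1 + p) = xi f ((k + p) + 2) := by ring_nf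
    have hA1 : (0:ℝ) < xi f (k+2) := lt_trans one_pos (xi_gt_one hf hns (k+1))
    have hA2 : (0:ℝ) < xi f ((k+p)+2) := lt_trans one_pos (xi_gt_one hf hns (k+p+1))
    have hl1 : c ≤ xi f (k+2) := xi_lower hf hns (k+1)
    have hl2 : c ≤ xi f ((k+p)+2) := xi_lower hf hns (k+p+1)
    have hpk' : cfA f (k + p + 1) = cfA f (k + 1) := by
      rw [show k + p + 1 = k + 1 + p from by ring]; exact hpk
    have hdk : d k = 1 / xi f ((k+p)+2) - 1 / xi f (k+2) := by
      rw [hd]; dsimp only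
      rw [e1, h1, h2, hpk']
      ring
    have hdk1 : d (k+1) = xi f ((k+p)+2) - xi f (k+2) := by
      rw [hd]; dsimp only
      rw [e2, show k + 1 + 1 = k + 2 from by ring]
    have hmul : (1 / xi f ((k+p)+2) - 1 / xi f (k+2)) * (xi f ((k+p)+2) * xi f (k+2)) =
        -(xi f ((k+p)+2) - xi f (k+2)) := by
      field_simp
      ring
    have habs : |d k| * (xi f ((k+p)+2) * xi f (k+2)) = |d (k+1)| := by
      rw [hdk, hdk1, ← abs_of_pos (mul_pos hA2 hA1), ← abs_mul, hmul, abs_neg]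
    calc c * |d k| ≤ (xi f ((k+p)+2) * xi f (k+2)) * |d k| := by
          have h0 : (0:ℝ) ≤ |d k| := abs_nonneg _
          have : c * 1 ≤ xi f ((k+p)+2) * xi f (k+2) := by
            nlinarith [hc1, hl1, hl2]
          nlinarith [this, h0]
      _ = |d k| * (xi f ((k+p)+2) * xi f (k+2)) := by ring
      _ = |d (k+1)| := habs
  have hbound : ∀ k, |d k| ≤ 2 * M := by
    intro k
    have h1 : 1 < xi f (k+1) := xi_gt_one hf hns k
    have h2 : xi f (k+1) ≤ M := xi_le hf hns k
    have h3 : 1 < xi f (k+1+p) := by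
      have := xi_gt_one hf hns (k+p)
      have e : k + p + 1 = k + 1 + p := by ring
      rwa [e] at this
    have h4 : xi f (k+1+p) ≤ M := by
      have := xi_le hf hns (k+p)
      have e : k + p + 1 = k + 1 + p := by ring
      rwa [e] at this
    rw [hd]; dsimp only
    rw [abs_le]
    constructor <;> linarith
  have hgeom : ∀ k, c ^ k * |d 0| ≤ |d k| := by
    intro k
    induction k with
    | zero => simp
    | succ k ih =>
      have := hgrow k
      calc c ^ (k+1) * |d 0| = c * (c ^ k * |d 0|) := by ring
        _ ≤ c * |d k| := by
            have hcpos : (0:ℝ) < c := by linarith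
            nlinarith [ih, hcpos]
        _ ≤ |d (k+1)| := this
  have hzero : d 0 = 0 := by
    by_contra hne
    have habs : 0 < |d 0| := abs_pos.mpr hne
    obtain ⟨k, hk⟩ := pow_unbounded_of_one_lt (2 * M / |d 0|) hc1
    have : 2 * M < c ^ k * |d 0| := by
      rw [div_lt_iff₀ habs] at hk
      linarith
    have := lt_of_lt_of_le this (hgeom k)
    exact absurd (hbound k) (by linarith)
  have : xi f (0 + 1 + p) - xi f (0 + 1) = 0 := hzero
  have e : (0:ℕ) + 1 + p = 1 + p := by ring
  rw [e] at this
  linarith [this]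

lemma rs_eq_of_xi_eq {f : ℕ} (hf : 0 < f) (hns : ¬ IsSquare f) {i j : ℕ}
    (hxe : xi f (i+1) = xi f (j+1)) : cfRS f (i+1) = cfRS f (j+1) := by
  obtain ⟨hr1, hr2, hs1, hrs, hsr, hkey⟩ := inv_all hf hns i
  obtain ⟨hr1', hr2', hs1', hrs', hsr', hkey'⟩ := inv_all hf hns j
  set r := (cfRS f (i+1)).1
  set s := (cfRS f (i+1)).2
  set r2 := (cfRS f (j+1)).1
  set s2 := (cfRS f (j+1)).2
  have hsR : (0:ℝ) < ((s:ℤ):ℝ) := by exact_mod_cast hs1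
  have hs2R : (0:ℝ) < ((s2:ℤ):ℝ) := by exact_mod_cast hs1'
  have hcross : (sq f + ((r:ℤ):ℝ)) * ((s2:ℤ):ℝ) = (sq f + ((r2:ℤ):ℝ)) * ((s:ℤ):ℝ) := by
    have := hxe
    rw [xi, xi, div_eq_div_iff hsR.ne' hs2R.ne'] at this
    exact this
  have hlin : sq f * (((s2:ℤ):ℝ) - ((s:ℤ):ℝ)) = ((r2 * s - r * s2 : ℤ) : ℝ) := by
    push_cast
    linarith [hcross]
  have hss : s2 = s := by
    by_contra hne
    have hirr : Irrational (Real.sqrt f) := irrational_sqrt_natCast_iff.mpr hns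
    have hden : ((s2 - s : ℤ) : ℝ) ≠ 0 := by
      exact_mod_cast sub_ne_zero.mpr hne
    have hlin' : Real.sqrt f * (((s2 - s : ℤ)):ℝ) = ((r2*s - r*s2 : ℤ):ℝ) := by
      have hsq' : sq f = Real.sqrt f := rfl
      rw [← hsq']
      push_cast at hlin ⊢
      linarith
    apply hirr
    refine ⟨((r2*s - r*s2 : ℤ):ℚ) / ((s2 - s : ℤ):ℚ), ?_⟩
    have hc : ((((r2*s - r*s2 : ℤ):ℚ) / ((s2 - s : ℤ):ℚ) : ℚ) : ℝ)
        = ((r2*s - r*s2 : ℤ):ℝ) / ((s2 - s : ℤ):ℝ) := by push_cast; ring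
    rw [hc, div_eq_iff hden]
    linarith [hlin']
  have hrr : r2 = r := by
    rw [hss] at hlin
    have h0 : ((r2 * s - r * s : ℤ) : ℝ) = 0 := by
      rw [← hlin]; ring
    have h1 : r2 * s - r * s = 0 := by exact_mod_cast h0
    have h2 : (r2 - r) * s = 0 := by linear_combination h1
    have hsne : s ≠ 0 := by omega
    rcases mul_eq_zero.mp h2 with h | h
    · omega
    · exact absurd h hsne
  have e1 : cfRS f (i+1) = (r, s) := rfl
  have e2 : cfRS f (j+1) = (r2, s2) := rfl
  rw [e1, e2, hss, hrr]



lemma cfA_zero (f : ℕ) : cfA f 0 = (Nat.sqrt f : ℤ) := by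
  simp [cfA, cfRS]

lemma conv {f : ℕ} (hf : 0 < f) (hns : ¬ IsSquare f) (k : ℕ) :
    cfNum f (k+2) = (cfRS f (k+1)).1 * cfDen f (k+2) + (cfRS f (k+1)).2 * cfDen f (k+1) ∧
    (f : ℤ) * cfDen f (k+2) = (cfRS f (k+1)).1 * cfNum f (k+2) + (cfRS f (k+1)).2 * cfNum f (k+1) := by
  induction k with
  | zero =>
    rw [cfRS_one]
    have e1 : cfNum f 2 = (Nat.sqrt f : ℤ) := by
      show cfA f 0 * cfNum f 1 + cfNum f 0 = _
      rw [cfA_zero]; simp [cfNum]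
    have e2 : cfDen f 2 = 1 := by
      show cfA f 0 * cfDen f 1 + cfDen f 0 = _
      simp [cfDen]
    rw [e1, e2]
    simp [cfNum, cfDen]
    ring
  | succ k ih =>
    obtain ⟨ih1, ih2⟩ := ih
    obtain ⟨hr1, hr2, hs1, hrs, hsr, hkey⟩ := inv_all hf hns k
    obtain ⟨hr1', hr2', hs1', hrs', hsr', hkey'⟩ := inv_all hf hns (k+1)
    set r := (cfRS f (k+1)).1
    set s := (cfRS f (k+1)).2
    set r2 := (cfRS f (k+2)).1
    set s2 := (cfRS f (k+2)).2
    set a : ℤ := cfA f (k+1) with ha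
    have hra : r2 = a * s - r := cfRS_succ_fst f (k+1)
    have hsne : s ≠ 0 := by omega
    have eN : cfNum f (k+3) = a * cfNum f (k+2) + cfNum f (k+1) := rfl
    have eB : cfDen f (k+3) = a * cfDen f (k+2) + cfDen f (k+1) := rfl
    constructor
    · apply mul_left_cancel₀ hsne
      rw [eN, eB]
      linear_combination r2*ih1 + r2*(cfDen f (k+2))*hra - (cfDen f (k+2))*hkey' - ih2
        - (cfNum f (k+2))*hra
    · apply mul_left_cancel₀ hsne
      rw [eN, eB]
      linear_combination -(cfNum f (k+2))*hkey' - ((f:ℤ))*ih1 + r2*(cfNum f (k+2))*hra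
        + r2*ih2 - ((f:ℤ))*(cfDen f (k+2))*hra

end CF14

theorem stmt_14 (f n : ℕ) (hf : 0 < f) (hns : ¬ IsSquare f)
    (hper : CFPeriod f (n + 1)) (hend : cfA f (n + 1) = 2 * cfA f 0) :
    cfDen f (n + 2) * ((f : ℤ) - cfA f 0 ^ 2) = cfNum f (n + 1) + cfA f 0 * cfDen f (n + 1) := by
  obtain ⟨⟨hp0, hp⟩, -⟩ := hper
  have hxe : CF14.xi f (1 + (n+1)) = CF14.xi f 1 := CF14.xi_periodic hf hns hp
  have hrs : cfRS f (n+2) = cfRS f 1 := by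
    have h := CF14.rs_eq_of_xi_eq hf hns (i := n+1) (j := 0)
      (by rw [show n+1+1 = 1+(n+1) from by ring]; exact hxe)
    rwa [show n+1+1 = n+2 from rfl] at h
  rw [CF14.cfRS_one] at hrs
  have hr2 : (cfRS f (n+2)).1 = (Nat.sqrt f : ℤ) := by rw [hrs]
  have hs2 : (cfRS f (n+2)).2 = (f:ℤ) - (Nat.sqrt f : ℤ)^2 := by rw [hrs]
  obtain ⟨-, -, -, -, -, hkey'⟩ := CF14.inv_all hf hns (n+1)
  have hfpos : (1:ℤ) ≤ (f:ℤ) - (Nat.sqrt f:ℤ)^2 := by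
    have := CF14.a0_sq_lt hns; omega
  have hs1 : (cfRS f (n+1)).2 = 1 := by
    rw [hs2, hr2] at hkey'
    have hz : ((f:ℤ) - (Nat.sqrt f:ℤ)^2) * ((cfRS f (n+1)).2 - 1) = 0 := by
      linear_combination hkey'
    rcases mul_eq_zero.mp hz with h | h
    · omega
    · omega
  have hrr : (cfRS f (n+1)).1 = (Nat.sqrt f : ℤ) := by
    have h := CF14.cfRS_succ_fst f (n+1)
    rw [hr2, hs1, hend, CF14.cfA_zero] at h
    omega
  obtain ⟨c1, c2⟩ := CF14.conv hf hns n
  rw [hrr, hs1] at c1 c2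
  rw [CF14.cfA_zero]
  linear_combination c2 + (Nat.sqrt f : ℤ) * c1
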